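/- For all real x and nonnegative integer n, the classical Bernoulli polynomial satisfies B_n(x) = ∑_{k=0, k≠1}^{n} C(n,k) B_k E_{n-k}(x), where B_k are Bernoulli numbers and E_j(x) are Euler polynomials. -/

import Mathlib

open Real Filter Topology Finset

/-- If a power series with coefficients `a` sums to `f t` for all `t` in a punctured
neighbourhood of `0`, then `f` tends to `a 0` as `t → 0`. -/
lemma aux_tendsto_coeff_zero {a : ℕ → ℝ} {f : ℝ → ℝ}
    (h : ∀ᶠ t in 𝓝[≠] (0 : ℝ), HasSum (fun k : ℕ => a k * t ^ k) (f t)) :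
    Tendsto f (𝓝[≠] (0 : ℝ)) (𝓝 (a 0)) := by
  rw [Filter.eventually_iff_exists_mem] at h
  obtain ⟨s, hs, hP⟩ := h
  rw [Metric.mem_nhdsWithin_iff] at hs
  obtain ⟨ε, hε, hball⟩ := hs
  set t0 : ℝ := ε / 2 with ht0def
  have ht0 : (0 : ℝ) < t0 := by positivity
  have hP' : ∀ t : ℝ, t ≠ 0 → |t| < ε → HasSum (fun k : ℕ => a k * t ^ k) (f t) := by
    intro t ht htε
    refine hP t (hball ⟨?_, ht⟩)
    simpa [Real.dist_eq] using htε
  have hPt0 : HasSum (fun k : ℕ => a k * t0 ^ k) (f t0) := by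
    refine hP' t0 (by positivity) ?_
    rw [abs_of_pos ht0]; linarith
  -- bound on coefficients
  have hbdd : BddAbove (Set.range fun k : ℕ => |a k * t0 ^ k|) := by
    have := hPt0.summable.tendsto_atTop_zero.abs
    simpa using this.bddAbove_range
  obtain ⟨M, hM⟩ := hbdd
  have hM' : ∀ k : ℕ, |a k * t0 ^ k| ≤ M := fun k => hM (Set.mem_range_self k)
  have hM0 : (0 : ℝ) ≤ M := le_trans (abs_nonneg _) (hM' 0)
  -- key bound
  have key : ∀ t : ℝ, t ≠ 0 → |t| < ε / 4 → ‖f t - a 0‖ ≤ 2 * M / t0 * |t| := by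
    intro t ht htε
    set q : ℝ := |t| / t0 with hqdef
    have hq0 : 0 ≤ q := by positivity
    have hq2 : q < 1 / 2 := by
      rw [hqdef, div_lt_iff₀ ht0]
      rw [ht0def]; linarith
    have hq1 : q < 1 := by linarith
    have hPt : HasSum (fun k : ℕ => a k * t ^ k) (f t) :=
      hP' t ht (by linarith)
    have hs1 : HasSum (fun k : ℕ => a (k + 1) * t ^ (k + 1)) (f t - a 0) := by
      have := (hasSum_nat_add_iff' (f := fun k : ℕ => a k * t ^ k) 1).mpr hPt
      simpa using this
    have geom : HasSum (fun k : ℕ => M * q * q ^ k) (M * q * (1 - q)⁻¹) :=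
      (hasSum_geometric_of_lt_one hq0 hq1).mul_left (M * q)
    have hbound : ∀ k : ℕ, ‖a (k + 1) * t ^ (k + 1)‖ ≤ M * q * q ^ k := by
      intro k
      have habs : |t| = q * t0 := by
        rw [hqdef]; field_simp
      have : |a (k + 1) * t ^ (k + 1)| = |a (k + 1) * t0 ^ (k + 1)| * q ^ (k + 1) := by
        rw [abs_mul, abs_mul, abs_pow, abs_pow, habs, abs_of_pos ht0, mul_pow]
        ring
      rw [Real.norm_eq_abs, this, pow_succ]
      calc |a (k + 1) * t0 ^ (k + 1)| * (q ^ k * q)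
          ≤ M * (q ^ k * q) := by
            apply mul_le_mul_of_nonneg_right (hM' (k + 1))
            positivity
        _ = M * q * q ^ k := by ring
    have h1 : ‖f t - a 0‖ ≤ M * q * (1 - q)⁻¹ := by
      have := tsum_of_norm_bounded geom hbound
      rwa [hs1.tsum_eq] at this
    have h2 : M * q * (1 - q)⁻¹ ≤ M * q * 2 := by
      apply mul_le_mul_of_nonneg_left _ (by positivity)
      rw [show (2 : ℝ) = (1 / 2 : ℝ)⁻¹ by norm_num]
      exact inv_anti₀ (by norm_num) (by linarith)
    have h3 : M * q * 2 = 2 * M / t0 * |t| := by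
      rw [hqdef]; field_simp
    linarith
  -- squeeze
  have hev : ∀ᶠ t in 𝓝[≠] (0 : ℝ), ‖f t - a 0‖ ≤ 2 * M / t0 * |t| := by
    have h4 : ∀ᶠ t in 𝓝 (0 : ℝ), |t| < ε / 4 := by
      have : Metric.ball (0 : ℝ) (ε / 4) ∈ 𝓝 (0 : ℝ) :=
        Metric.ball_mem_nhds _ (by positivity)
      filter_upwards [this] with t ht
      simpa [Real.dist_eq] using ht
    filter_upwards [h4.filter_mono nhdsWithin_le_nhds, self_mem_nhdsWithin] with t h1 h2
    exact key t h2 h1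
  have hlim : Tendsto (fun t : ℝ => 2 * M / t0 * |t|) (𝓝[≠] (0 : ℝ)) (𝓝 0) := by
    have : Tendsto (fun t : ℝ => 2 * M / t0 * |t|) (𝓝 (0 : ℝ)) (𝓝 (2 * M / t0 * |0|)) :=
      (Continuous.tendsto (by continuity) 0)
    simpa using this.mono_left nhdsWithin_le_nhds
  have := squeeze_zero_norm' hev hlim
  rwa [tendsto_sub_nhds_zero_iff] at this

/-- Shifting a power series by one. -/
lemma aux_hasSum_shift {a : ℕ → ℝ} {t s : ℝ} (ht : t ≠ 0)
    (h : HasSum (fun k : ℕ => a k * t ^ k) s) :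
    HasSum (fun k : ℕ => a (k + 1) * t ^ k) ((s - a 0) / t) := by
  have h1 : HasSum (fun k : ℕ => a (k + 1) * t ^ (k + 1)) (s - a 0) := by
    have := (hasSum_nat_add_iff' (f := fun k : ℕ => a k * t ^ k) 1).mpr h
    simpa using this
  have h2 := h1.div_const t
  refine h2.congr_fun fun k => ?_
  rw [pow_succ]
  field_simp

/-- A power series whose sum vanishes on a punctured neighbourhood of zero has
all coefficients zero. -/
lemma aux_coeff_zero : ∀ (k : ℕ) (a : ℕ → ℝ),
    (∀ᶠ t in 𝓝[≠] (0 : ℝ), HasSum (fun k : ℕ => a k * t ^ k) 0) → a k = 0 := by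
  intro k
  induction k with
  | zero =>
    intro a h
    have h1 : Tendsto (fun _ : ℝ => (0 : ℝ)) (𝓝[≠] (0 : ℝ)) (𝓝 (a 0)) :=
      aux_tendsto_coeff_zero (f := fun _ => 0) h
    exact tendsto_nhds_unique h1 tendsto_const_nhds
  | succ k ih =>
    intro a h
    have ha0 : a 0 = 0 := by
      have h1 : Tendsto (fun _ : ℝ => (0 : ℝ)) (𝓝[≠] (0 : ℝ)) (𝓝 (a 0)) :=
        aux_tendsto_coeff_zero (f := fun _ => 0) h
      exact tendsto_nhds_unique h1 tendsto_const_nhds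
    refine ih (fun k => a (k + 1)) ?_
    filter_upwards [h, self_mem_nhdsWithin] with t ht htne
    have := aux_hasSum_shift htne ht
    simpa [ha0] using this

/-- Uniqueness of power series coefficients. -/
lemma aux_coeff_ext {a b : ℕ → ℝ} {f : ℝ → ℝ}
    (ha : ∀ᶠ t in 𝓝[≠] (0 : ℝ), HasSum (fun k : ℕ => a k * t ^ k) (f t))
    (hb : ∀ᶠ t in 𝓝[≠] (0 : ℝ), HasSum (fun k : ℕ => b k * t ^ k) (f t)) :
    ∀ k, a k = b k := by
  intro k
  have h : ∀ᶠ t in 𝓝[≠] (0 : ℝ),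
      HasSum (fun k : ℕ => (a k - b k) * t ^ k) 0 := by
    filter_upwards [ha, hb] with t h1 h2
    have := h1.sub h2
    simpa [sub_mul] using this
  have := aux_coeff_zero k (fun k => a k - b k) h
  linarith

lemma aux_exp_hasSum (t : ℝ) :
    HasSum (fun n : ℕ => (1 / (n.factorial : ℝ)) * t ^ n) (Real.exp t) := by
  have := NormedSpace.expSeries_div_hasSum_exp t
  rw [← Real.exp_eq_exp_ℝ] at this
  refine this.congr_fun fun n => ?_
  ring

theorem bernoulli_euler_relation (B : ℕ → ℝ) (Bp : ℕ → ℝ → ℝ) (E : ℕ → ℝ → ℝ)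
    (hB : ∀ᶠ t in 𝓝[≠] (0 : ℝ),
      HasSum (fun k : ℕ => B k * t ^ k / (k.factorial : ℝ)) (t / (Real.exp t - 1)))
    (hBp : ∀ x : ℝ, ∀ᶠ t in 𝓝[≠] (0 : ℝ),
      HasSum (fun n : ℕ => Bp n x * t ^ n / (n.factorial : ℝ))
        (t * Real.exp (x * t) / (Real.exp t - 1)))
    (hE : ∀ x : ℝ, ∀ᶠ t in 𝓝 (0 : ℝ),
      HasSum (fun n : ℕ => E n x * t ^ n / (n.factorial : ℝ))
        (2 * Real.exp (x * t) / (Real.exp t + 1))) :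
    ∀ (x : ℝ) (n : ℕ),
      Bp n x = ∑ k ∈ (Finset.range (n + 1)).erase 1,
        (n.choose k : ℝ) * B k * E (n - k) x := by
  classical
  -- normalized form of hB
  have hB' : ∀ᶠ t in 𝓝[≠] (0 : ℝ),
      HasSum (fun k : ℕ => (B k / (k.factorial : ℝ)) * t ^ k) (t / (Real.exp t - 1)) := by
    filter_upwards [hB] with t h
    exact h.congr_fun fun k => by ring
  have hexp_ne : ∀ t : ℝ, t ≠ 0 → Real.exp t - 1 ≠ 0 := by
    intro t ht h
    refine ht (Real.exp_injective (a₁ := t) (a₂ := 0) ?_)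
    rw [Real.exp_zero]; linarith
  -- limit of (exp t - 1)/t
  have lim1 : Tendsto (fun t : ℝ => (Real.exp t - 1) / t) (𝓝[≠] (0 : ℝ)) (𝓝 1) := by
    have h := aux_tendsto_coeff_zero (a := fun n : ℕ => 1 / ((n + 1).factorial : ℝ))
      (f := fun t => (Real.exp t - 1) / t) ?_
    · simpa using h
    · filter_upwards [self_mem_nhdsWithin] with t ht
      have := aux_hasSum_shift (a := fun n : ℕ => 1 / (n.factorial : ℝ)) ht
        (aux_exp_hasSum t)
      simpa using this
  -- limit of ((exp t - 1)/t - 1)/t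
  have lim2 : Tendsto (fun t : ℝ => ((Real.exp t - 1) / t - 1) / t)
      (𝓝[≠] (0 : ℝ)) (𝓝 (1 / 2)) := by
    have h := aux_tendsto_coeff_zero (a := fun n : ℕ => 1 / ((n + 1 + 1).factorial : ℝ))
      (f := fun t => ((Real.exp t - 1) / t - 1) / t) ?_
    · have : (1 : ℝ) / ((0 + 1 + 1).factorial : ℝ) = 1 / 2 := by norm_num [Nat.factorial]
      rwa [this] at h
    · filter_upwards [self_mem_nhdsWithin] with t ht
      have h1 := aux_hasSum_shift (a := fun n : ℕ => 1 / (n.factorial : ℝ)) ht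
        (aux_exp_hasSum t)
      have h2 := aux_hasSum_shift (a := fun n : ℕ => 1 / ((n + 1).factorial : ℝ)) ht h1
      simpa using h2
  -- limit of t/(exp t - 1)
  have limA : Tendsto (fun t : ℝ => t / (Real.exp t - 1)) (𝓝[≠] (0 : ℝ)) (𝓝 1) := by
    have := lim1.inv₀ one_ne_zero
    simpa [inv_div] using this
  have hB0 : B 0 = 1 := by
    have h1 : Tendsto (fun t : ℝ => t / (Real.exp t - 1)) (𝓝[≠] (0 : ℝ)) (𝓝 (B 0)) := by
      have := aux_tendsto_coeff_zero hB'
      simpa using this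
    exact tendsto_nhds_unique h1 limA
  have hB1 : B 1 = -(1 / 2) := by
    have h1 : Tendsto (fun t : ℝ => (t / (Real.exp t - 1) - 1) / t)
        (𝓝[≠] (0 : ℝ)) (𝓝 (B 1)) := by
      have h := aux_tendsto_coeff_zero
        (a := fun k : ℕ => B (k + 1) / ((k + 1).factorial : ℝ))
        (f := fun t => (t / (Real.exp t - 1) - 1) / t) ?_
      · simpa using h
      · filter_upwards [hB', self_mem_nhdsWithin] with t h ht
        have := aux_hasSum_shift ht h
        simpa [hB0] using this
    have h2 : Tendsto (fun t : ℝ => (t / (Real.exp t - 1) - 1) / t)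
        (𝓝[≠] (0 : ℝ)) (𝓝 (-(1 / 2))) := by
      have hmul : Tendsto
          (fun t : ℝ => -((((Real.exp t - 1) / t - 1) / t) * (t / (Real.exp t - 1))))
          (𝓝[≠] (0 : ℝ)) (𝓝 (-(1 / 2 * 1))) := (lim2.mul limA).neg
      have heq : (fun t : ℝ => -((((Real.exp t - 1) / t - 1) / t) * (t / (Real.exp t - 1))))
          =ᶠ[𝓝[≠] (0 : ℝ)] fun t : ℝ => (t / (Real.exp t - 1) - 1) / t := by
        filter_upwards [self_mem_nhdsWithin] with t ht
        have ht' : t ≠ 0 := ht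
        have hu : Real.exp t - 1 ≠ 0 := hexp_ne t ht'
        field_simp
        ring
      have := hmul.congr' heq
      simpa using this
    exact tendsto_nhds_unique h1 h2
  intro x n
  set c : ℕ → ℝ := Function.update (fun k : ℕ => B k / (k.factorial : ℝ)) 1 0 with hc
  set e : ℕ → ℝ := fun m : ℕ => E m x / (m.factorial : ℝ) with he
  set d : ℕ → ℝ := fun m : ℕ => ∑ k ∈ Finset.range (m + 1), c k * e (m - k) with hd
  have claim1 : ∀ᶠ t in 𝓝[≠] (0 : ℝ),
      HasSum (fun m : ℕ => d m * t ^ m)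
        (t * Real.exp (x * t) / (Real.exp t - 1)) := by
    filter_upwards [hB', (hE x).filter_mono nhdsWithin_le_nhds, self_mem_nhdsWithin]
      with t hBt hEt ht
    have hu : Real.exp t - 1 ≠ 0 := hexp_ne t ht
    have hv : Real.exp t + 1 ≠ 0 := by positivity
    have f1 : HasSum (fun k : ℕ => c k * t ^ k) (t / (Real.exp t - 1) + t / 2) := by
      have h1 := hBt.update 1 0
      have h2 : (fun k : ℕ => c k * t ^ k)
          = Function.update (fun k : ℕ => (B k / (k.factorial : ℝ)) * t ^ k) 1 0 := by
        funext k
        by_cases hk : k = 1 <;> simp [hc, Function.update, hk]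
      rw [h2]
      convert h1 using 1
      · rfl
      simp [hB1, Nat.factorial]
      ring
    have f2 : HasSum (fun m : ℕ => e m * t ^ m)
        (2 * Real.exp (x * t) / (Real.exp t + 1)) := by
      refine hEt.congr_fun fun m => ?_
      simp only [he]
      ring
    have s1 : Summable fun k : ℕ => ‖c k * t ^ k‖ := by
      have := f1.summable.abs
      simp only [← Real.norm_eq_abs] at this
      exact this
    have s2 : Summable fun m : ℕ => ‖e m * t ^ m‖ := by
      have := f2.summable.abs
      simp only [← Real.norm_eq_abs] at this
      exact this
    have hcs := (summable_norm_sum_mul_range_of_summable_norm s1 s2).of_norm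
    have hts := tsum_mul_tsum_eq_tsum_sum_range_of_summable_norm s1 s2
    rw [f1.tsum_eq, f2.tsum_eq] at hts
    have hfinal := hcs.hasSum
    rw [← hts] at hfinal
    have hval : (t / (Real.exp t - 1) + t / 2) * (2 * Real.exp (x * t) / (Real.exp t + 1))
        = t * Real.exp (x * t) / (Real.exp t - 1) := by
      field_simp
      ring
    rw [hval] at hfinal
    refine hfinal.congr_fun fun m => ?_
    rw [hd, Finset.sum_mul]
    refine Finset.sum_congr rfl fun k hk => ?_
    have hkm : k ≤ m := Nat.lt_succ_iff.mp (Finset.mem_range.mp hk)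
    have hpow : t ^ k * t ^ (m - k) = t ^ m := by
      rw [← pow_add, Nat.add_sub_cancel' hkm]
    rw [← hpow]
    ring
  have hBp' : ∀ᶠ t in 𝓝[≠] (0 : ℝ),
      HasSum (fun m : ℕ => (Bp m x / (m.factorial : ℝ)) * t ^ m)
        (t * Real.exp (x * t) / (Real.exp t - 1)) := by
    filter_upwards [hBp x] with t h
    exact h.congr_fun fun m => by ring
  have claim2 := aux_coeff_ext hBp' claim1
  have hn := claim2 n
  have hfact : (n.factorial : ℝ) ≠ 0 := Nat.cast_ne_zero.mpr n.factorial_ne_zero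
  have hBpn : Bp n x = (n.factorial : ℝ) * d n := by
    field_simp at hn
    linarith [hn]
  have hd1 : d n = ∑ k ∈ (Finset.range (n + 1)).erase 1, c k * e (n - k) :=
    (Finset.sum_erase _ (by simp [hc])).symm
  rw [hBpn, hd1, Finset.mul_sum]
  refine Finset.sum_congr rfl fun k hk => ?_
  obtain ⟨hk1, hkr⟩ := Finset.mem_erase.mp hk
  have hkn : k ≤ n := Nat.lt_succ_iff.mp (Finset.mem_range.mp hkr)
  rw [Nat.cast_choose ℝ hkn]
  simp only [hc, he, Function.update_of_ne hk1]
  have h1 : (k.factorial : ℝ) ≠ 0 := Nat.cast_ne_zero.mpr k.factorial_ne_zero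
  have h2 : ((n - k).factorial : ℝ) ≠ 0 := Nat.cast_ne_zero.mpr (n - k).factorial_ne_zero
  field_simp
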